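/- arXiv:1304.6994 — 6 statements merged into one kernel-verified Lean document; each statement's English description precedes it below -/
import Mathlib

section
/- Let g be a finite connected graph on n ≥ 1 vertices, with diameter D, and let K = (2n-1)(D+1)+2. Assign to each vertex v a distinct identity id_v ∈ {0,...,n-1}. If a configuration r : V → Z/KZ satisfies d_K(r(u), r(v)) ≤ D for all vertices u, v, then at most one vertex v satisfies r(v) ≡ 2n + 2·D·id_v (mod K). -/
/-- `d_K(c,c') = min((c-c') mod K, (c'-c) mod K)`, with `mod K` taking
values in `{0,...,K-1}`. -/
def dK (K c c' : ℤ) : ℤ := min ((c - c') % K) ((c' - c) % K)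

lemma key_mod (K D n m : ℤ) (hD : 1 ≤ D) (hn : 1 ≤ n)
    (hK : K = (2 * n - 1) * (D + 1) + 2)
    (h1 : 1 ≤ m) (h2 : m ≤ n - 1) :
    D < (2 * D * m) % K ∧ D < (2 * D * (-m)) % K := by
  have hlt : 2 * D * m < K := by nlinarith
  have hpos : D < 2 * D * m := by nlinarith
  have hpos0 : 0 < 2 * D * m := by nlinarith
  have hKpos : 0 < K := by nlinarith
  have e1 : (2 * D * m) % K = 2 * D * m := Int.emod_eq_of_lt (by omega) hlt
  have e2 : (2 * D * (-m)) % K = K - 2 * D * m := by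
    have : (2 * D * (-m)) % K = (2 * D * (-m) + K * 1) % K :=
      (Int.add_mul_emod_self_left ..).symm
    rw [this]
    have : 2 * D * (-m) + K * 1 = K - 2 * D * m := by ring
    rw [this]
    exact Int.emod_eq_of_lt (by omega) (by omega)
  constructor
  · omega
  · rw [e2]; nlinarith

/-- Mutual-exclusion safety of EMSS in legitimate unison configurations:
with `K = (2n-1)(D+1)+2` and distinct identities in `{0,...,n-1}`, if all
pairwise clock distances are at most the diameter `D`, then at most one
vertex is privileged, i.e. satisfies `r v ≡ 2n + 2·D·id_v (mod K)`. -/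
theorem stmt6 {V : Type*} [Fintype V] (g : SimpleGraph V) (hconn : g.Connected)
    (n D : ℕ) (hn : 1 ≤ n) (hcard : Fintype.card V = n) (hD : g.diam = D)
    (K : ℤ) (hK : K = (2 * n - 1) * (D + 1) + 2)
    (id_ : V → ℕ) (hid : ∀ v, id_ v < n) (hinj : Function.Injective id_)
    (r : V → ℤ) (hleg : ∀ u v : V, dK K (r u) (r v) ≤ (D : ℤ)) :
    ∀ u v : V, r u ≡ 2 * n + 2 * D * id_ u [ZMOD K] →
      r v ≡ 2 * n + 2 * D * id_ v [ZMOD K] → u = v := by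
  intro u v hu hv
  by_cases hD0 : D = 0
  · -- diameter 0: the graph is a single vertex
    have hne : Nonempty V := hconn.nonempty
    have hediam : g.ediam ≠ ⊤ := by
      obtain ⟨a, b, hab⟩ := g.exists_edist_eq_ediam_of_finite
      rw [← hab]
      exact SimpleGraph.edist_ne_top_iff_reachable.mpr (hconn.preconnected a b)
    have hdist : g.dist u v ≤ g.diam := SimpleGraph.dist_le_diam hediam
    rw [hD, hD0] at hdist
    have h0 : g.dist u v = 0 := Nat.le_zero.mp hdist
    rcases SimpleGraph.dist_eq_zero_iff_eq_or_not_reachable.mp h0 with h | h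
    · exact h
    · exact absurd (hconn.preconnected u v) h
  · -- D ≥ 1
    by_contra hne
    have hidne : id_ u ≠ id_ v := fun h => hne (hinj h)
    have hDz : (1 : ℤ) ≤ (D : ℤ) := by exact_mod_cast Nat.one_le_iff_ne_zero.mpr hD0
    have hnz : (1 : ℤ) ≤ (n : ℤ) := by exact_mod_cast hn
    have huv := hu.sub hv
    have hvu := hv.sub hu
    have huv' : r u - r v ≡ 2 * D * ((id_ u : ℤ) - id_ v) [ZMOD K] := by
      calc r u - r v ≡ (2 * n + 2 * D * id_ u) - (2 * n + 2 * D * id_ v) [ZMOD K] := huv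
        _ = 2 * D * ((id_ u : ℤ) - id_ v) := by ring
    have hvu' : r v - r u ≡ 2 * D * ((id_ v : ℤ) - id_ u) [ZMOD K] := by
      calc r v - r u ≡ (2 * n + 2 * D * id_ v) - (2 * n + 2 * D * id_ u) [ZMOD K] := hvu
        _ = 2 * D * ((id_ v : ℤ) - id_ u) := by ring
    have hl := hleg u v
    unfold dK at hl
    have hu1 := hid u
    have hv1 := hid v
    have hu1' : (id_ u : ℤ) < n := by exact_mod_cast hu1
    have hv1' : (id_ v : ℤ) < n := by exact_mod_cast hv1
    have hidne' : (id_ u : ℤ) ≠ (id_ v : ℤ) := by exact_mod_cast hidne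
    rcases lt_or_gt_of_ne hidne' with h | h
    · -- id u < id v
      set m : ℤ := (id_ v : ℤ) - id_ u with hm
      have ⟨k1, k2⟩ := key_mod K D n m hDz hnz hK (by omega)
        (by have : (0:ℤ) ≤ (id_ u : ℤ) := Int.natCast_nonneg _; omega)
      have e1 : (r v - r u) % K = (2 * D * m) % K := hvu'
      have e2 : (r u - r v) % K = (2 * D * (-m)) % K := by
        have : 2 * D * ((id_ u : ℤ) - id_ v) = 2 * D * (-m) := by ring
        rw [← this]; exact huv'
      rw [e1, e2] at hl
      omega
    · set m : ℤ := (id_ u : ℤ) - id_ v with hm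
      have ⟨k1, k2⟩ := key_mod K D n m hDz hnz hK (by omega)
        (by have : (0:ℤ) ≤ (id_ v : ℤ) := Int.natCast_nonneg _; omega)
      have e1 : (r u - r v) % K = (2 * D * m) % K := huv'
      have e2 : (r v - r u) % K = (2 * D * (-m)) % K := by
        have : 2 * D * ((id_ v : ℤ) - id_ u) = 2 * D * (-m) := by ring
        rw [← this]; exact hvu'
      rw [e1, e2] at hl
      omega
end

section
/- For n ≥ 1 and D ≥ 1, the n privilege values p_i = 2n + 2·D·i for i ∈ {0,...,n-1} are pairwise at d_K-distance strictly greater than D in Z/KZ, where K = (2n-1)(D+1)+2: for all i ≠ j in {0,...,n-1}, d_K(p_i, p_j) > D. -/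
lemma dK_comm (K c c' : ℤ) : dK K c c' = dK K c' c := by
  unfold dK; exact min_comm _ _

/-- The `n` privilege values `p_i = 2n + 2·D·i`, `i ∈ {0,...,n-1}`, are
pairwise at `d_K`-distance strictly greater than `D`, where
`K = (2n-1)(D+1)+2`. -/
theorem stmt7 (n D : ℤ) (hn : 1 ≤ n) (hD : 1 ≤ D)
    (K : ℤ) (hK : K = (2 * n - 1) * (D + 1) + 2) :
    ∀ i j : ℤ, 0 ≤ i → i < n → 0 ≤ j → j < n → i ≠ j →
      D < dK K (2 * n + 2 * D * i) (2 * n + 2 * D * j) := by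
  have key : ∀ i j : ℤ, 0 ≤ i → i < n → 0 ≤ j → j < n → j < i →
      D < dK K (2 * n + 2 * D * i) (2 * n + 2 * D * j) := by
    intro i j hi0 hin hj0 hjn hji
    set x := 2 * D * (i - j) with hx
    have hm1 : 1 ≤ i - j := by omega
    have hm2 : i - j ≤ n - 1 := by omega
    have hd : (2 * n + 2 * D * i) - (2 * n + 2 * D * j) = x := by ring
    have hd' : (2 * n + 2 * D * j) - (2 * n + 2 * D * i) = -x := by ring
    have h1 : 0 ≤ x := by nlinarith
    have h2 : x < K := by nlinarith
    have hxD : D < x := by nlinarith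
    have hKxD : D < K - x := by nlinarith
    have hmod1 : x % K = x := Int.emod_eq_of_lt h1 h2
    have hmod2 : (-x) % K = K - x := by
      have : (-x) % K = (-x + K * 1) % K := (Int.add_mul_emod_self_left (-x) K 1).symm
      rw [this]
      have h3 : -x + K * 1 = K - x := by ring
      rw [h3]
      exact Int.emod_eq_of_lt (by linarith) (by linarith)
    unfold dK
    rw [hd, hd', hmod1, hmod2]
    exact lt_min hxD hKxD
  intro i j hi0 hin hj0 hjn hij
  rcases lt_or_gt_of_ne hij with h | h
  · rw [dK_comm]; exact key j i hj0 hjn hi0 hin h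
  · exact key i j hi0 hin hj0 hjn h
end

section
/- Let ≤_{init} be the natural order on init_X = {-α,...,0}. If in a configuration every clock value lies in init_X and each vertex with a value in {-α,...,-1} that is locally minimal (w.r.t. ≤_{init}) among its neighbors increments synchronously, then some vertex holding the global minimum value strictly increases the global minimum or the global minimum is already 0; consequently, after at most α synchronous steps all clock values equal values in stab_X ∩ init_X = {0} or greater along the increment function. -/
open scoped Classical

/-- Synchronous execution of the convergence rule `CA` of the unison
protocol: starting from a configuration with all clock values in
`init_X = {-α,...,0}`, at each step every vertex with a value in
`{-α,...,-1}` that is `≤_init`-locally minimal among its neighbours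
increments.  Then, as long as the global minimum is negative it strictly
increases at each step, and after `α` steps all values equal `0`. -/
theorem stmt9 {V : Type*} [Fintype V] [Nonempty V]
    (g : SimpleGraph V) (hconn : g.Connected)
    (α : ℤ) (hα : 1 ≤ α) (K : ℤ) (hK : 2 ≤ K)
    (ρ : ℕ → V → ℤ)
    (hinit : ∀ v, -α ≤ ρ 0 v ∧ ρ 0 v ≤ 0)
    (hstep : ∀ k v,
      ρ (k + 1) v =
        if (-α ≤ ρ k v ∧ ρ k v ≤ -1) ∧
            (∀ u ∈ g.neighborSet v, (-α ≤ ρ k u ∧ ρ k u ≤ 0) ∧ ρ k v ≤ ρ k u)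
        then ρ k v + 1 else ρ k v) :
    (∀ k : ℕ,
      Finset.univ.inf' Finset.univ_nonempty (ρ k) < 0 →
        Finset.univ.inf' Finset.univ_nonempty (ρ k) <
          Finset.univ.inf' Finset.univ_nonempty (ρ (k + 1))) ∧
    (∀ v, ρ α.toNat v = 0) := by
  have hinv : ∀ k v, -α ≤ ρ k v ∧ ρ k v ≤ 0 := by
    intro k
    induction k with
    | zero => exact hinit
    | succ k ih =>
      intro v
      rw [hstep]
      split_ifs with h
      · exact ⟨le_trans (ih v).1 (by linarith), by linarith [h.1.2]⟩
      · exact ih v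
  have hmono : ∀ k v, ρ k v ≤ ρ (k + 1) v := by
    intro k v; rw [hstep]; split_ifs <;> linarith
  set m : ℕ → ℤ := fun k => Finset.univ.inf' Finset.univ_nonempty (ρ k) with hm
  have hm_le : ∀ k v, m k ≤ ρ k v := fun k v => Finset.inf'_le _ (Finset.mem_univ v)
  have hm_nonpos : ∀ k, m k ≤ 0 :=
    fun k => le_trans (hm_le k (Classical.arbitrary V)) (hinv k _).2
  have hstrict : ∀ k, m k < 0 → m k < m (k + 1) := by
    intro k hneg
    have h1 : m k + 1 ≤ m (k + 1) := by
      apply Finset.le_inf'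
      intro v _
      rw [hstep]
      split_ifs with h
      · linarith [hm_le k v]
      · by_cases hv : ρ k v = m k
        · exfalso
          apply h
          refine ⟨⟨(hinv k v).1, by omega⟩, ?_⟩
          intro u _
          exact ⟨hinv k u, by rw [hv]; exact hm_le k u⟩
        · have := hm_le k v; omega
    linarith
  have hmmono : ∀ k, m k ≤ m (k + 1) := by
    intro k
    exact Finset.le_inf' _ _ (fun v _ => le_trans (hm_le k v) (hmono k v))
  refine ⟨hstrict, ?_⟩
  have hb : ∀ k : ℕ, -α + k ≤ m k ∨ 0 ≤ m k := by
    intro k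
    induction k with
    | zero =>
      left
      have h0 : -α ≤ m 0 := Finset.le_inf' _ _ (fun v _ => (hinit v).1)
      push_cast
      omega
    | succ k ih =>
      by_cases hneg : m k < 0
      · rcases ih with ih | ih
        · left
          have := hstrict k hneg
          push_cast
          omega
        · omega
      · right
        have := hmmono k
        omega
  intro v
  have h1 : m α.toNat ≤ ρ α.toNat v := hm_le _ v
  have h2 := hb α.toNat
  have h3 := (hinv α.toNat v).2
  have h4 := hm_nonpos α.toNat
  have h5 : (α.toNat : ℤ) = α := Int.toNat_of_nonneg (by linarith)
  omega
end

section
/- In a path graph on vertices 0,...,D (so diameter D), consider the synchronous unison dynamics where at each step every vertex whose clock value in Z/KZ is locally minimal (w.r.t. ≤_l) among itself and its neighbors increments by 1 mod K (K ≥ 2D+2). If initially vertex i has clock value c_i with d_K(c_i, c_{i+1}) ≤ 1 for all i, then this safety invariant d_K(c_i, c_{i+1}) ≤ 1 is preserved by every synchronous step. -/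
open scoped Classical

/-- The local order `c ≤_l c'` : `(c'-c) mod K ∈ {0,1}`. -/
def lle (K c c' : ℤ) : Prop := (c' - c) % K = 0 ∨ (c' - c) % K = 1

private lemma shift_emod_left (K x y : ℤ) : ((x % K) - y) % K = (x - y) % K := by
  rw [Int.sub_emod, Int.emod_emod_of_dvd x dvd_rfl, ← Int.sub_emod]

private lemma shift_emod_right (K x y : ℤ) : (y - (x % K)) % K = (y - x) % K := by
  rw [Int.sub_emod, Int.emod_emod_of_dvd x dvd_rfl, ← Int.sub_emod]

/-- On the path graph `0 — 1 — ⋯ — D`, the synchronous unison step (every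
`≤_l`-locally-minimal vertex increments its clock by `1` mod `K`,
`K ≥ 2D+2`) preserves the safety invariant `d_K(c_i, c_{i+1}) ≤ 1` on
edges. -/
theorem stmt10 (D : ℕ) (K : ℤ) (hK : (2 * D + 2 : ℤ) ≤ K)
    (c : Fin (D + 1) → ℤ)
    (hsafe : ∀ u v : Fin (D + 1), (SimpleGraph.pathGraph (D + 1)).Adj u v →
      dK K (c u) (c v) ≤ 1)
    (c' : Fin (D + 1) → ℤ)
    (hstep : ∀ v, c' v =
      if ∀ u, (SimpleGraph.pathGraph (D + 1)).Adj v u → lle K (c v) (c u)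
      then (c v + 1) % K else c v) :
    ∀ u v : Fin (D + 1), (SimpleGraph.pathGraph (D + 1)).Adj u v →
      dK K (c' u) (c' v) ≤ 1 := by
  intro u v hadj
  have hadj' := hadj.symm
  have hD : 1 ≤ D := by
    have h := SimpleGraph.pathGraph_adj.mp hadj
    have hu := u.isLt; have hv := v.isLt
    omega
  have hK3 : (3 : ℤ) ≤ K := by omega
  have hKne : K ≠ 0 := by omega
  have hK0 : (0 : ℤ) < K := by omega
  set a := c u with ha
  set b := c v with hb
  set d1 := (a - b) % K with hd1
  set d2 := (b - a) % K with hd2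
  have h1n : 0 ≤ d1 := Int.emod_nonneg _ hKne
  have h2n : 0 ≤ d2 := Int.emod_nonneg _ hKne
  have h1l : d1 < K := Int.emod_lt_of_pos _ hK0
  have h2l : d2 < K := Int.emod_lt_of_pos _ hK0
  have hmin : min d1 d2 ≤ 1 := hsafe u v hadj
  have hsum : d1 + d2 = 0 ∨ d1 + d2 = K := by
    have hmod : (d1 + d2) % K = 0 := by
      rw [hd1, hd2, ← Int.add_emod]
      simp
    obtain ⟨k, hk⟩ := Int.dvd_of_emod_eq_zero hmod
    have hk0 : 0 ≤ k := by nlinarith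
    have hk2 : k < 2 := by nlinarith
    have : k = 0 ∨ k = 1 := by omega
    rcases this with h | h <;> rw [h] at hk <;> omega
  have hcases : (d2 = 0 ∧ d1 = 0) ∨ (d2 = 1 ∧ d1 = K - 1) ∨
      (d2 = K - 1 ∧ d1 = 1) := by omega
  -- fixed-clock facts
  have hvfix : d1 = K - 1 → c' v = b := by
    intro h
    rw [hstep v, if_neg]
    intro hall
    have := hall u hadj'
    rw [lle, ← ha] at this
    rw [← hd1] at this
    omega
  have hufix : d2 = K - 1 → c' u = a := by
    intro h
    rw [hstep u, if_neg]
    intro hall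
    have := hall v hadj
    rw [lle, ← hb] at this
    rw [← hd2] at this
    omega
  have hcu : c' u = a ∨ c' u = (a + 1) % K := by
    rw [hstep u]; split_ifs <;> simp [ha]
  have hcv : c' v = b ∨ c' v = (b + 1) % K := by
    rw [hstep v]; split_ifs <;> simp [hb]
  obtain ⟨q, hq⟩ : ∃ q, b - a = d2 + K * q :=
    ⟨(b - a) / K, by linarith [Int.emod_add_mul_ediv (b - a) K]⟩
  obtain ⟨p, hp⟩ : ∃ p, a - b = d1 + K * p :=
    ⟨(a - b) / K, by linarith [Int.emod_add_mul_ediv (a - b) K]⟩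
  rw [dK]
  have h1K : (1 : ℤ) % K = 1 := Int.emod_eq_of_lt (by omega) (by omega)
  have h0K : (0 : ℤ) % K = 0 := by simp
  rcases hcases with ⟨e2, e1⟩ | ⟨e2, e1⟩ | ⟨e2, e1⟩
  · -- d2 = 0, d1 = 0
    rcases hcu with hu' | hu' <;> rcases hcv with hv' | hv' <;>
      rw [hu', hv']
    · rw [← hd1, ← hd2]; omega
    · -- side (c'v - c'u) = ((b+1)%K - a)%K = 1
      have : ((b + 1) % K - a) % K = 1 := by
        rw [shift_emod_left, show b + 1 - a = (d2 + 1) + K * q by linarith,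
          Int.add_mul_emod_self_left, e2]
        simpa using h1K
      rw [this]; omega
    · have : ((a + 1) % K - b) % K = 1 := by
        rw [shift_emod_left, show a + 1 - b = (d1 + 1) + K * p by linarith,
          Int.add_mul_emod_self_left, e1]
        simpa using h1K
      rw [this]; omega
    · have : ((b + 1) % K - (a + 1) % K) % K = 0 := by
        rw [shift_emod_left, shift_emod_right,
          show b + 1 - (a + 1) = d2 + K * q by linarith,
          Int.add_mul_emod_self_left, e2]
        simp
      rw [this]; omega
  · -- d2 = 1, d1 = K - 1 : v is fixed
    rw [hvfix e1]
    rcases hcu with hu' | hu' <;> rw [hu']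
    · rw [← hd2]; omega
    · have : (b - (a + 1) % K) % K = 0 := by
        rw [shift_emod_right, show b - (a + 1) = (d2 - 1) + K * q by linarith,
          Int.add_mul_emod_self_left, e2]
        simp
      rw [this]; omega
  · -- d2 = K - 1, d1 = 1 : u is fixed
    rw [hufix e2]
    rcases hcv with hv' | hv' <;> rw [hv']
    · rw [← hd1]; omega
    · have : (a - (b + 1) % K) % K = 0 := by
        rw [shift_emod_right, show a - (b + 1) = (d1 - 1) + K * p by linarith,
          Int.add_mul_emod_self_left, e1]
        simp
      rw [this]; omega
end

section
/- In the synchronous unison dynamics on a finite connected graph with all adjacent clock values locally comparable (d_K ≤ 1, K > 2·diam(g)+1), every vertex increments its clock at least once within every window of n consecutive synchronous steps, where n is the number of vertices. -/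
open scoped Classical

private lemma modeq_emod (a K : ℤ) : a % K ≡ a [ZMOD K] :=
  Int.emod_emod_of_dvd a dvd_rfl

private lemma eq_of_modeq_of_abs_lt {K a b : ℤ} (h : a ≡ b [ZMOD K]) (h2 : |a - b| < K) :
    a = b := by
  have hd := h.dvd
  have := Int.eq_zero_of_abs_lt_dvd hd (by rwa [abs_sub_comm] at h2)
  omega

/-- Integer lift of the clocks, following the synchronous dynamics. -/
noncomputable def unisonLift {V : Type*} (g : SimpleGraph V) (K : ℤ) (ρ : ℕ → V → ℤ)
    (d : ℤ) (v0 : V) : ℕ → V → ℤ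
  | 0 => fun v => ρ 0 v0 + ((ρ 0 v - ρ 0 v0 + d) % K - d)
  | (t+1) => fun v => unisonLift g K ρ d v0 t v +
      if ∀ u, g.Adj v u → lle K (ρ t v) (ρ t u) then 1 else 0

private lemma unisonLift_zero {V : Type*} (g : SimpleGraph V) (K : ℤ) (ρ : ℕ → V → ℤ)
    (d : ℤ) (v0 v : V) :
    unisonLift g K ρ d v0 0 v = ρ 0 v0 + ((ρ 0 v - ρ 0 v0 + d) % K - d) := rfl

private lemma unisonLift_succ {V : Type*} (g : SimpleGraph V) (K : ℤ) (ρ : ℕ → V → ℤ)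
    (d : ℤ) (v0 : V) (t : ℕ) (v : V) :
    unisonLift g K ρ d v0 (t+1) v = unisonLift g K ρ d v0 t v +
      if ∀ u, g.Adj v u → lle K (ρ t v) (ρ t u) then 1 else 0 := rfl

/-- Bound on the base-point normalization along a walk. -/
private lemma sigma_walk_bound {V : Type*} (g : SimpleGraph V) (K d : ℤ) (f : V → ℤ)
    (hd0 : 0 ≤ d) (hK : 2 * d + 1 < K)
    (hε : ∀ u v : V, g.Adj u v → ∃ ε : ℤ, |ε| ≤ 1 ∧ f u - f v ≡ ε [ZMOD K]) :
    ∀ (v w : V) (p : g.Walk v w), (p.length : ℤ) ≤ d →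
      |(f v - f w + d) % K - d| ≤ (p.length : ℤ) := by
  have hK0 : 0 < K := by omega
  intro v w p
  induction p with
  | nil =>
    intro _
    have h0 : (d % K) = d := Int.emod_eq_of_lt hd0 (by omega)
    simp [h0]
  | @cons a b c h q ih =>
    intro hlen
    rw [SimpleGraph.Walk.length_cons] at hlen ⊢
    push_cast at hlen ⊢
    have hq : (q.length : ℤ) ≤ d := by omega
    have ihq := ih hq
    obtain ⟨ε, hε1, hεm⟩ := hε a b h
    set σa : ℤ := (f a - f c + d) % K - d with hσa
    set σb : ℤ := (f b - f c + d) % K - d with hσb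
    have hma : σa ≡ f a - f c [ZMOD K] := by
      have := (modeq_emod (f a - f c + d) K).sub_right d
      simpa using this
    have hmb : σb ≡ f b - f c [ZMOD K] := by
      have := (modeq_emod (f b - f c + d) K).sub_right d
      simpa using this
    have hmod : σa - σb ≡ ε [ZMOD K] := by
      have h1 := hma.sub hmb
      have h2 : f a - f c - (f b - f c) = f a - f b := by ring
      rw [h2] at h1
      exact h1.trans hεm
    have hla : -d ≤ σa := by
      have := Int.emod_nonneg (f a - f c + d) (ne_of_gt hK0); omega
    have hua : σa ≤ K - d - 1 := by
      have := Int.emod_lt_of_pos (f a - f c + d) hK0; omega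
    have heq : σa - σb = ε := by
      apply eq_of_modeq_of_abs_lt hmod
      rw [abs_le] at ihq hε1
      rw [abs_lt]
      constructor <;> omega
    rw [abs_le] at ihq hε1 ⊢
    omega

/-- Liveness of synchronous unison: with `K > 2·diam(g)+1` and all adjacent
clock values locally comparable, under the synchronous dynamics (each step
increments exactly the `≤_l`-locally-minimal vertices) every vertex
increments at least once in every window of `n = #V` consecutive steps. -/
theorem stmt12 {V : Type*} [Fintype V] [Nonempty V]
    (g : SimpleGraph V) (hconn : g.Connected)
    (K : ℤ) (hK : (2 * g.diam + 1 : ℤ) < K)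
    (ρ : ℕ → V → ℤ)
    (hsafe : ∀ u v : V, g.Adj u v → dK K (ρ 0 u) (ρ 0 v) ≤ 1)
    (hstep : ∀ k v, ρ (k + 1) v =
      if ∀ u, g.Adj v u → lle K (ρ k v) (ρ k u)
      then (ρ k v + 1) % K else ρ k v) :
    ∀ (v : V) (t : ℕ), ∃ s, t ≤ s ∧ s < t + Fintype.card V ∧
      (∀ u, g.Adj v u → lle K (ρ s v) (ρ s u)) := by
  classical
  set n := Fintype.card V with hn
  set d : ℤ := (g.diam : ℤ) with hdd
  have hd0 : 0 ≤ d := Int.ofNat_nonneg _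
  have hK0 : 0 < K := by omega
  have hediam : g.ediam ≠ ⊤ := by
    obtain ⟨u, v, huv⟩ := g.exists_edist_eq_ediam_of_finite
    rw [← huv]
    exact (SimpleGraph.edist_ne_top_iff_reachable).mpr (hconn u v)
  have hdist : ∀ u v : V, (g.dist u v : ℤ) ≤ d := by
    intro u v
    rw [hdd]
    exact_mod_cast SimpleGraph.dist_le_diam hediam
  have hadjK : ∀ {u v : V}, g.Adj u v → 3 ≤ K := by
    intro u v h
    have h1 : 1 ≤ g.dist u v := hconn.pos_dist_of_ne h.ne
    have h2 := hdist u v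
    omega
  obtain ⟨v0⟩ := (inferInstance : Nonempty V)
  set ℓ := unisonLift g K ρ d v0 with hℓ
  set σ : V → ℤ := fun v => (ρ 0 v - ρ 0 v0 + d) % K - d with hσdef
  have hℓ0 : ∀ v, ℓ 0 v = ρ 0 v0 + σ v := fun v => unisonLift_zero g K ρ d v0 v
  have hℓs : ∀ t v, ℓ (t+1) v = ℓ t v +
      if ∀ u, g.Adj v u → lle K (ρ t v) (ρ t u) then 1 else 0 := by
    intro t v
    rw [hℓ, unisonLift_succ]
    split_ifs <;> rfl
  -- congruence of σ
  have hσmod : ∀ v, σ v ≡ ρ 0 v - ρ 0 v0 [ZMOD K] := by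
    intro v
    have := (modeq_emod (ρ 0 v - ρ 0 v0 + d) K).sub_right d
    simpa using this
  -- safety at time 0 gives small differences mod K
  have hε : ∀ u v : V, g.Adj u v → ∃ ε : ℤ, |ε| ≤ 1 ∧ ρ 0 u - ρ 0 v ≡ ε [ZMOD K] := by
    intro u v h
    have hs := hsafe u v h
    unfold dK at hs
    have h1 := Int.emod_nonneg (ρ 0 u - ρ 0 v) (ne_of_gt hK0)
    have h2 := Int.emod_nonneg (ρ 0 v - ρ 0 u) (ne_of_gt hK0)
    rcases le_or_gt ((ρ 0 u - ρ 0 v) % K) ((ρ 0 v - ρ 0 u) % K) with hc | hc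
    · refine ⟨(ρ 0 u - ρ 0 v) % K, by rw [abs_of_nonneg h1]; omega,
        ((modeq_emod _ K).symm)⟩
    · refine ⟨-((ρ 0 v - ρ 0 u) % K), by rw [abs_neg, abs_of_nonneg h2]; omega, ?_⟩
      have := (modeq_emod (ρ 0 v - ρ 0 u) K).neg
      simpa using this.symm
  have hσd : ∀ v, |σ v| ≤ d := by
    intro v
    obtain ⟨p, _, hp⟩ := hconn.exists_path_of_dist v v0
    have hl : (p.length : ℤ) ≤ d := by rw [hp]; exact hdist v v0
    exact le_trans (sigma_walk_bound g K d (ρ 0) hd0 hK hε v v0 p hl) hl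
  -- lle characterization given the invariants at time t
  have hlleOf : ∀ t : ℕ, (∀ v, ρ t v ≡ ℓ t v [ZMOD K]) →
      (∀ u v : V, g.Adj u v → |ℓ t u - ℓ t v| ≤ 1) →
      ∀ u v : V, g.Adj u v → (lle K (ρ t u) (ρ t v) ↔ ℓ t u ≤ ℓ t v) := by
    intro t ihc iha u v h
    have hK3 := hadjK h
    have hmod : ρ t v - ρ t u ≡ ℓ t v - ℓ t u [ZMOD K] := (ihc v).sub (ihc u)
    have habs := iha u v h
    have he : ℓ t u - ℓ t v = -1 ∨ ℓ t u - ℓ t v = 0 ∨ ℓ t u - ℓ t v = 1 := by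
      rw [abs_le] at habs; omega
    unfold lle
    have hmm : (ρ t v - ρ t u) % K = (ℓ t v - ℓ t u) % K := hmod
    rcases he with he | he | he
    · have h1 : ℓ t v - ℓ t u = 1 := by omega
      rw [hmm, h1, Int.emod_eq_of_lt (by omega) (by omega)]
      constructor
      · intro _; omega
      · intro _; right; rfl
    · have h1 : ℓ t v - ℓ t u = 0 := by omega
      rw [hmm, h1]
      simp; omega
    · have h1 : ℓ t v - ℓ t u = -1 := by omega
      rw [hmm, h1]
      have hm1 : (-1 : ℤ) % K = K - 1 := by
        have hd : (K : ℤ) ∣ (K - 1) - (-1) := ⟨1, by ring⟩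
        have h2 : (-1 : ℤ) ≡ K - 1 [ZMOD K] := Int.modEq_iff_dvd.mpr hd
        rw [Int.ModEq] at h2
        rw [h2, Int.emod_eq_of_lt (by omega) (by omega)]
      rw [hm1]
      constructor
      · intro hc; omega
      · intro hc; omega
  -- invariants: congruence and adjacent lipschitz
  have hInv : ∀ t, (∀ v, ρ t v ≡ ℓ t v [ZMOD K]) ∧
      (∀ u v, g.Adj u v → |ℓ t u - ℓ t v| ≤ 1) := by
    intro t
    induction t with
    | zero =>
      constructor
      · intro v
        rw [hℓ0]
        have h1 := (hσmod v).add_left (ρ 0 v0)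
        have h2 : ρ 0 v0 + (ρ 0 v - ρ 0 v0) = ρ 0 v := by ring
        rw [h2] at h1
        exact h1.symm
      · intro u v h
        obtain ⟨ε, hε1, hεm⟩ := hε u v h
        have hmod : σ u - σ v ≡ ε [ZMOD K] := by
          have h1 := (hσmod u).sub (hσmod v)
          have h2 : ρ 0 u - ρ 0 v0 - (ρ 0 v - ρ 0 v0) = ρ 0 u - ρ 0 v := by ring
          rw [h2] at h1
          exact h1.trans hεm
        have heq : σ u - σ v = ε := by
          apply eq_of_modeq_of_abs_lt hmod
          have h1 := hσd u; have h2 := hσd v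
          have hK3 := hadjK h
          rw [abs_le] at h1 h2 hε1
          rw [abs_lt]
          constructor <;> omega
        rw [hℓ0, hℓ0]
        have h3 : ρ 0 v0 + σ u - (ρ 0 v0 + σ v) = σ u - σ v := by ring
        rw [h3, heq]
        exact hε1
    | succ t ih =>
      obtain ⟨ihc, iha⟩ := ih
      have hlle := hlleOf t ihc iha
      constructor
      · intro v
        rw [hstep t v, hℓs t v]
        by_cases hf : ∀ u, g.Adj v u → lle K (ρ t v) (ρ t u)
        · rw [if_pos hf, if_pos hf]
          exact (modeq_emod _ K).trans ((ihc v).add_right 1)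
        · rw [if_neg hf, if_neg hf]
          simpa using ihc v
      · intro u v h
        rw [hℓs t u, hℓs t v]
        have habs := iha u v h
        by_cases hu : ∀ w, g.Adj u w → lle K (ρ t u) (ρ t w) <;>
          by_cases hv : ∀ w, g.Adj v w → lle K (ρ t v) (ρ t w)
        · rw [if_pos hu, if_pos hv]; rw [abs_le] at habs ⊢; omega
        · rw [if_pos hu, if_neg hv]
          have hle : ℓ t u ≤ ℓ t v := (hlle u v h).mp (hu v h)
          rw [abs_le] at habs ⊢; omega
        · rw [if_neg hu, if_pos hv]
          have hle : ℓ t v ≤ ℓ t u := (hlle v u h.symm).mp (hv u h.symm)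
          rw [abs_le] at habs ⊢; omega
        · rw [if_neg hu, if_neg hv]; rw [abs_le] at habs ⊢; omega
  have hlle : ∀ (t : ℕ) (u v : V), g.Adj u v →
      (lle K (ρ t u) (ρ t v) ↔ ℓ t u ≤ ℓ t v) :=
    fun t => hlleOf t (hInv t).1 (hInv t).2
  -- the minimum of the lift
  have hne : (Finset.univ : Finset V).Nonempty := Finset.univ_nonempty
  set m : ℕ → ℤ := fun t => Finset.univ.inf' hne (ℓ t) with hm
  have hmle : ∀ t v, m t ≤ ℓ t v := fun t v => Finset.inf'_le _ (Finset.mem_univ v)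
  have hmstep : ∀ t, m t + 1 ≤ m (t + 1) := by
    intro t
    apply Finset.le_inf'
    intro v _
    rw [hℓs t v]
    by_cases hf : ∀ u, g.Adj v u → lle K (ρ t v) (ρ t u)
    · rw [if_pos hf]
      have := hmle t v; omega
    · rw [if_neg hf]
      push_neg at hf
      obtain ⟨u, hadj, hnl⟩ := hf
      have h1 : ¬ (ℓ t v ≤ ℓ t u) := fun hc => hnl ((hlle t v u hadj).mpr hc)
      have h2 := hmle t u
      omega
  have hms : ∀ t s : ℕ, m t + s ≤ m (t + s) := by
    intro t s
    induction s with
    | zero => simp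
    | succ s ih =>
      have h1 := hmstep (t + s)
      have h2 : t + (s+1) = (t + s) + 1 := by omega
      rw [h2]
      push_cast
      push_cast at ih
      omega
  -- walk bound on lift differences
  have hW : ∀ (t : ℕ) (u v : V) (p : g.Walk u v), |ℓ t u - ℓ t v| ≤ (p.length : ℤ) := by
    intro t u v p
    induction p with
    | nil => simp
    | @cons a b c h q ih =>
      have h1 := (hInv t).2 a b h
      rw [SimpleGraph.Walk.length_cons]
      push_cast
      rw [abs_le] at h1 ih ⊢
      omega
  -- final argument
  intro v t
  by_contra hcon
  push_neg at hcon
  have hnfire : ∀ s, t ≤ s → s < t + n → ¬ (∀ u, g.Adj v u → lle K (ρ s v) (ρ s u)) := by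
    intro s h1 h2 hf
    obtain ⟨u, hadj, hnl⟩ := hcon s h1 h2
    exact hnl (hf u hadj)
  have hn1 : 1 ≤ n := Fintype.card_pos
  have hconst : ∀ j, j < n → ℓ (t + j) v = ℓ t v := by
    intro j
    induction j with
    | zero => intro _; rfl
    | succ j ih =>
      intro hj
      have h1 : t + (j+1) = (t + j) + 1 := by omega
      rw [h1, hℓs (t+j) v, if_neg (hnfire (t+j) (by omega) (by omega))]
      rw [ih (by omega)]
      ring
  -- distance bound
  obtain ⟨w, _, hw⟩ := Finset.exists_mem_eq_inf' hne (ℓ t)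
  have hwm : m t = ℓ t w := hw
  obtain ⟨p, hpath, _⟩ := hconn.exists_path_of_dist w v
  have hplen : (p.length : ℤ) ≤ (n : ℤ) - 1 := by
    have := hpath.length_lt
    rw [hn]
    omega
  have hbound : ℓ t v ≤ m t + ((n : ℤ) - 1) := by
    have h1 := hW t w v p
    rw [abs_le] at h1
    omega
  have hs2 : m t + ((n-1 : ℕ) : ℤ) ≤ m (t + (n-1)) := hms t (n-1)
  have hcast : ((n-1 : ℕ) : ℤ) = (n : ℤ) - 1 := by omega
  have hℓconst : ℓ (t + (n-1)) v = ℓ t v := hconst (n-1) (by omega)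
  have hmin : ∀ u, ℓ (t + (n-1)) v ≤ ℓ (t + (n-1)) u := by
    intro u
    have h1 := hmle (t + (n-1)) u
    rw [hℓconst]
    omega
  apply hnfire (t + (n-1)) (by omega) (by omega)
  intro u hadj
  exact (hlle (t + (n-1)) v u hadj).mpr (hmin u)
end

section
/- In the synchronous unison dynamics on a finite connected graph starting from a safety-satisfying configuration (adjacent values at d_K-distance ≤ 1 in Z/KZ with K > 2·diam(g)+2), consider the potential function M(γ) = max over vertices of the 'lag' behind the maximal clock along a shortest path ordering; then the maximal d_K-spread max_{u,v} d_K(r_u, r_v) never increases under a synchronous step. -/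
open scoped Classical

/-- balanced representative -/
def bal (K x : ℤ) : ℤ := (x + K / 2) % K - K / 2

lemma bal_emod (K x : ℤ) : bal K x % K = x % K := by
  unfold bal
  conv_rhs => rw [show x = (x + K / 2) - K / 2 by ring]
  rw [Int.sub_emod, Int.sub_emod (x + K / 2), Int.emod_emod_of_dvd _ dvd_rfl]

lemma bal_lb {K : ℤ} (hK : 0 < K) (x : ℤ) : -(K / 2) ≤ bal K x := by
  have := Int.emod_nonneg (x + K / 2) (ne_of_gt hK)
  unfold bal; omega

lemma bal_ub {K : ℤ} (hK : 0 < K) (x : ℤ) : bal K x ≤ K - K / 2 - 1 := by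
  have := Int.emod_lt_of_pos (x + K / 2) hK
  unfold bal; omega

lemma eq_of_emod_eq {K a b : ℤ} (hK : 0 < K)
    (h : a % K = b % K) (ha1 : -(K / 2) ≤ a) (ha2 : a ≤ K - K / 2 - 1)
    (hb1 : -(K / 2) ≤ b) (hb2 : b ≤ K - K / 2 - 1) : a = b := by
  have hd : K ∣ (a - b) := by
    apply Int.dvd_of_emod_eq_zero
    rw [Int.sub_emod, h]; simp
  have := Int.eq_zero_of_abs_lt_dvd hd (by rw [abs_lt]; omega)
  omega

lemma bal_unique {K x a : ℤ} (hK : 0 < K)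
    (hcong : a % K = x % K) (h1 : -(K / 2) ≤ a) (h2 : a ≤ K - K / 2 - 1) :
    bal K x = a :=
  eq_of_emod_eq hK ((bal_emod K x).trans hcong.symm) (bal_lb hK x) (bal_ub hK x) h1 h2

lemma dK_eq_abs_bal {K : ℤ} (hK : 0 < K) (c c' : ℤ) :
    dK K c c' = |bal K (c - c')| := by
  set x := c - c' with hx
  have hx' : c' - c = -x := by omega
  have hm1 : 0 ≤ x % K := Int.emod_nonneg x (ne_of_gt hK)
  have hm2 : x % K < K := Int.emod_lt_of_pos x hK
  have hself : (x % K) % K = x % K := Int.emod_emod_of_dvd x dvd_rfl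
  rcases eq_or_lt_of_le hm1 with h0 | hpos
  · -- x % K = 0
    have hz : x % K = 0 := h0.symm
    have hneg : (-x) % K = 0 := by
      exact Int.emod_eq_zero_of_dvd ((Int.dvd_of_emod_eq_zero hz).neg_right)
    have hb : bal K x = 0 := bal_unique hK (by simpa using hz.symm) (by omega) (by omega)
    rw [dK, hx', hb, hz, hneg]; simp
  · -- x % K > 0
    have hneg : (-x) % K = K - x % K := by
      have hc : (K - x % K) % K = (-x) % K := by
        rw [Int.neg_emod_eq_sub_emod, Int.sub_emod, Int.sub_emod K x, hself]
      rw [← hc, Int.emod_eq_of_lt (by omega) (by omega)]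
    rcases le_or_gt (x % K) (K - K / 2 - 1) with hle | hgt
    · have hb : bal K x = x % K := bal_unique hK hself (by omega) hle
      rw [dK, hx', hb, hneg, abs_of_nonneg hm1]
      have : x % K ≤ K - x % K := by omega
      exact min_eq_left this
    · have hb : bal K x = x % K - K :=
        bal_unique hK (by rw [Int.sub_emod, Int.emod_self, hself]; simp) (by omega) (by omega)
      rw [dK, hx', hb, hneg, abs_of_nonpos (by omega)]
      have : K - x % K ≤ x % K := by omega
      rw [min_eq_right this]; ring

lemma bal_walk {V : Type*} (g : SimpleGraph V) {K D : ℤ} (hD : 0 ≤ D)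
    (hK : 2 * D + 2 < K) (r : V → ℤ)
    (hsafe : ∀ u v : V, g.Adj u v → dK K (r u) (r v) ≤ 1) :
    ∀ (u v : V) (p : g.Walk u v), (p.length : ℤ) ≤ D →
      |bal K (r v - r u)| ≤ (p.length : ℤ) := by
  have hK0 : (0:ℤ) < K := by omega
  intro u v p
  induction p with
  | nil =>
    intro _
    have h0 : bal K 0 = 0 := bal_unique hK0 (by simp) (by omega) (by omega)
    simp [h0]
  | @cons a b c hab q ih =>
    intro hlen
    rw [SimpleGraph.Walk.length_cons] at hlen ⊢
    push_cast at hlen ⊢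
    have hq : (q.length : ℤ) ≤ D := by omega
    have ih' := abs_le.mp (ih hq)
    have hedge : |bal K (r b - r a)| ≤ 1 := by
      rw [← dK_eq_abs_bal hK0]
      exact hsafe b a hab.symm
    have hedge' := abs_le.mp hedge
    have hcong : (bal K (r c - r b) + bal K (r b - r a)) % K = (r c - r a) % K := by
      conv_rhs => rw [show r c - r a = (r c - r b) + (r b - r a) by ring]
      rw [Int.add_emod, bal_emod, bal_emod, ← Int.add_emod]
    have hsum : bal K (r c - r a) = bal K (r c - r b) + bal K (r b - r a) := by
      apply bal_unique hK0 hcong (by omega) (by omega)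
    rw [hsum, abs_le]
    omega

/-- Under a synchronous unison step (every `≤_l`-locally-minimal vertex
increments by `1` mod `K`), starting from a safety-satisfying configuration
(adjacent values at `d_K`-distance ≤ 1, `K > 2·diam(g)+2`) on a finite
connected graph, the maximal pairwise `d_K`-spread does not increase. -/
theorem stmt19 {V : Type*} [Fintype V] [Nonempty V]
    (g : SimpleGraph V) (hconn : g.Connected)
    (K : ℤ) (hK : (2 * g.diam + 2 : ℤ) < K)
    (r : V → ℤ)
    (hsafe : ∀ u v : V, g.Adj u v → dK K (r u) (r v) ≤ 1)
    (r' : V → ℤ)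
    (hstep : ∀ v, r' v =
      if ∀ u, g.Adj v u → lle K (r v) (r u) then (r v + 1) % K else r v) :
    (Finset.univ ×ˢ Finset.univ).sup' (by simp)
        (fun p : V × V => dK K (r' p.1) (r' p.2)) ≤
    (Finset.univ ×ˢ Finset.univ).sup' (by simp)
        (fun p : V × V => dK K (r p.1) (r p.2)) := by
  set D : ℤ := (g.diam : ℤ) with hDdef
  have hD0 : (0:ℤ) ≤ D := Int.ofNat_nonneg _
  have hK0 : (0:ℤ) < K := by omega
  have hnetop : g.ediam ≠ ⊤ := by
    obtain ⟨u, v, huv⟩ := g.exists_edist_eq_ediam_of_finite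
    rw [← huv]
    exact SimpleGraph.edist_ne_top_iff_reachable.mpr (hconn u v)
  have hdist : ∀ u v : V, (g.dist u v : ℤ) ≤ D := by
    intro u v
    rw [hDdef]
    exact_mod_cast SimpleGraph.dist_le_diam hnetop
  have hwalk := bal_walk g hD0 hK r hsafe
  have hbalpair : ∀ u v : V, |bal K (r v - r u)| ≤ D := by
    intro u v
    obtain ⟨p, hp⟩ := hconn.exists_walk_length_eq_dist u v
    have h1 : (p.length : ℤ) ≤ D := by rw [hp]; exact hdist u v
    exact (hwalk u v p h1).trans h1
  have v₀ : V := Classical.arbitrary V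
  set s : V → ℤ := fun v => r v₀ + bal K (r v - r v₀) with hs
  have hsmod : ∀ v, s v % K = r v % K := by
    intro v
    conv_rhs => rw [show r v = r v₀ + (r v - r v₀) by ring]
    rw [hs]
    simp only
    rw [Int.add_emod, bal_emod, ← Int.add_emod]
  have hedge : ∀ a b, g.Adj a b → |bal K (r a - r b)| ≤ 1 := by
    intro a b h
    rw [← dK_eq_abs_bal hK0]
    exact hsafe a b h
  have hadjdiff : ∀ a b, g.Adj a b → s a - s b = bal K (r a - r b) := by
    intro a b h
    have h1 := abs_le.mp (hbalpair v₀ a)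
    have h2 := abs_le.mp (hbalpair v₀ b)
    have h3 := abs_le.mp (hedge a b h)
    have hsab : s a - s b = bal K (r a - r v₀) - bal K (r b - r v₀) := by
      rw [hs]; ring
    have hc : (s a - s b) % K = bal K (r a - r b) % K := by
      rw [hsab, bal_emod, Int.sub_emod, bal_emod, bal_emod, ← Int.sub_emod]
      congr 1; ring
    have hdvd : K ∣ (s a - s b - bal K (r a - r b)) :=
      Int.dvd_of_emod_eq_zero (by rw [Int.sub_emod, hc]; simp)
    have := Int.eq_zero_of_abs_lt_dvd hdvd (by rw [abs_lt]; omega)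
    omega
  have hpairwalk : ∀ (u v : V) (p : g.Walk u v), |s u - s v| ≤ (p.length : ℤ) := by
    intro u v p
    induction p with
    | nil => simp
    | @cons a b c hab q ih =>
      have h1 := hadjdiff a b hab
      have h2 := abs_le.mp (hedge a b hab)
      have ih' := abs_le.mp ih
      rw [SimpleGraph.Walk.length_cons]
      push_cast
      rw [abs_le]
      omega
  have hsD : ∀ u v : V, |s u - s v| ≤ D := by
    intro u v
    obtain ⟨p, hp⟩ := hconn.exists_walk_length_eq_dist u v
    have := hpairwalk u v p
    rw [hp] at this
    exact this.trans (hdist u v)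
  have hpair : ∀ u v : V, s u - s v = bal K (r u - r v) := by
    intro u v
    have hsd := abs_le.mp (hsD u v)
    refine (bal_unique hK0 ?_ (by omega) (by omega)).symm
    rw [Int.sub_emod, hsmod, hsmod, ← Int.sub_emod]
  have hlle : ∀ v u, g.Adj v u →
      ((lle K (r v) (r u)) ↔ (s u - s v = 0 ∨ s u - s v = 1)) := by
    intro v u hadj
    have he : s u - s v = bal K (r u - r v) := hpair u v
    have hb := abs_le.mp (hedge u v hadj.symm)
    have hcong : (r u - r v) % K = (s u - s v) % K := by
      rw [Int.sub_emod, ← hsmod, ← hsmod, ← Int.sub_emod]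
    unfold lle
    rw [hcong]
    have hcases : s u - s v = -1 ∨ s u - s v = 0 ∨ s u - s v = 1 := by omega
    rcases hcases with h | h | h <;> rw [h]
    · have hm : (-1 : ℤ) % K = K - 1 := by
        rw [show (-1 : ℤ) = -(1:ℤ) from rfl, Int.neg_emod_eq_sub_emod,
          Int.emod_eq_of_lt (by omega) (by omega)]
      rw [hm]; omega
    · simp
    · rw [Int.emod_eq_of_lt (by omega) (by omega)]
  have hne : (Finset.univ : Finset V).Nonempty := Finset.univ_nonempty
  obtain ⟨p, -, hp⟩ := Finset.exists_mem_eq_sup' hne s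
  obtain ⟨q, -, hq⟩ := Finset.exists_mem_eq_inf' hne s
  set M := Finset.univ.sup' hne s with hM
  set m := Finset.univ.inf' hne s with hm
  have hmle : ∀ v, m ≤ s v := fun v => Finset.inf'_le _ (Finset.mem_univ v)
  have hleM : ∀ v, s v ≤ M := fun v => Finset.le_sup' _ (Finset.mem_univ v)
  have hMm : M - m ≤ D := by
    have h1 := abs_le.mp (hsD p q)
    rw [hp, hq]
    omega
  have hmM : m ≤ M := (hmle p).trans (hleM p)
  set s' : V → ℤ := fun v =>
    if ∀ u, g.Adj v u → lle K (r v) (r u) then s v + 1 else s v with hs'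
  have hr's : ∀ v, r' v % K = s' v % K := by
    intro v
    rw [hstep v, hs']
    simp only
    split
    · rw [Int.emod_emod_of_dvd _ dvd_rfl, Int.add_emod, ← hsmod, ← Int.add_emod]
    · exact (hsmod v).symm
  have hs'lb : ∀ v, m + 1 ≤ s' v := by
    intro v
    rw [hs']
    simp only
    split
    case isTrue => have := hmle v; omega
    case isFalse hcond =>
      rcases eq_or_lt_of_le (hmle v) with heq | hlt
      · exfalso
        apply hcond
        intro u hadj
        rw [hlle v u hadj]
        have h1 := abs_le.mp (hedge u v hadj.symm)
        have h2 := hpair u v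
        have h3 := hmle u
        omega
      · omega
  have hs'ub : ∀ v, s' v ≤ M + 1 := by
    intro v
    rw [hs']
    simp only
    split <;> [skip; skip] <;> (have := hleM v; omega)
  have hRHS : M - m ≤ (Finset.univ ×ˢ Finset.univ).sup' (by simp)
      (fun x : V × V => dK K (r x.1) (r x.2)) := by
    have hdpq : dK K (r p) (r q) = M - m := by
      rw [dK_eq_abs_bal hK0, ← hpair p q, hp, hq, abs_of_nonneg (by omega)]
    rw [← hdpq]
    exact Finset.le_sup' (f := fun x : V × V => dK K (r x.1) (r x.2))
      (b := (p, q)) (Finset.mem_product.mpr ⟨Finset.mem_univ p, Finset.mem_univ q⟩)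
  apply Finset.sup'_le
  intro x _
  have h1 := hs'lb x.1
  have h2 := hs'ub x.1
  have h3 := hs'lb x.2
  have h4 := hs'ub x.2
  have hbal' : bal K (r' x.1 - r' x.2) = s' x.1 - s' x.2 := by
    apply bal_unique hK0
    · rw [Int.sub_emod, ← hr's, ← hr's, ← Int.sub_emod]
    · omega
    · omega
  have hdx : dK K (r' x.1) (r' x.2) = |s' x.1 - s' x.2| := by
    rw [dK_eq_abs_bal hK0, hbal']
  rw [hdx]
  calc |s' x.1 - s' x.2| ≤ M - m := by rw [abs_le]; omega
    _ ≤ _ := hRHS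
end
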